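/- Let V ⊆ ℝ^M be a convex polytope (the convex hull of a finite set of points) and let v* ∈ V be Pareto optimal in V, i.e., no v ∈ V Pareto dominates v*. Then there exists λ ∈ ℝ^M with λ_i > 0 for all i and ∑_{i=1}^M λ_i = 1 such that λ^⊤ v* ≥ λ^⊤ v for all v ∈ V. -/

import Mathlib

open Finset
open scoped InnerProductSpace

/-- `u` Pareto dominates `v`: `u_i ≥ v_i` for all `i` and `u_j > v_j` for
some `j`. -/
def ParetoDom {M : ℕ} (u v : Fin M → ℝ) : Prop :=
  (∀ i, v i ≤ u i) ∧ ∃ i, v i < u i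

section ConeLemmas

variable {E : Type*} [NormedAddCommGroup E] [NormedSpace ℝ E]

/-- The set of nonnegative combinations of the vectors `g j`, `j ∈ s`. -/
def coneOf {ι : Type*} (g : ι → E) (s : Finset ι) : Set E :=
  {x | ∃ t : ι → ℝ, (∀ j, 0 ≤ t j) ∧ x = ∑ j ∈ s, t j • g j}

lemma coneOf_mono {ι : Type*} (g : ι → E) {s s' : Finset ι} (h : s' ⊆ s) :
    coneOf g s' ⊆ coneOf g s := by
  rintro x ⟨t, ht, rfl⟩
  classical
  refine ⟨fun j => if j ∈ s' then t j else 0,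
    fun j => by by_cases h : j ∈ s' <;> simp [h, ht j], ?_⟩
  have h1 : ∑ j ∈ s', (if j ∈ s' then t j else 0) • g j
      = ∑ j ∈ s, (if j ∈ s' then t j else 0) • g j :=
    Finset.sum_subset h (fun j _ hj => by simp [hj])
  rw [← h1]
  exact (Finset.sum_congr rfl fun j hj => by simp [hj]).symm

lemma caratheodory_coneOf {ι : Type*} (g : ι → E) :
    ∀ (n : ℕ) (s : Finset ι), s.card ≤ n → ∀ x ∈ coneOf g s,
      ∃ s' : Finset ι, s' ⊆ s ∧ LinearIndependent ℝ (fun j : s' => g j) ∧ x ∈ coneOf g s' := by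
  classical
  intro n
  induction n with
  | zero =>
    intro s hs x hx
    refine ⟨s, Finset.Subset.refl s, ?_, hx⟩
    have : s = ∅ := Finset.card_eq_zero.mp (Nat.le_zero.mp hs)
    subst this
    have : IsEmpty ((∅ : Finset ι) : Type _) := by
      constructor; rintro ⟨j, hj⟩; simp at hj
    exact linearIndependent_empty_type
  | succ n ih =>
    intro s hs x hx
    by_cases hli : LinearIndependent ℝ (fun j : s => g j)
    · exact ⟨s, Finset.Subset.refl s, hli, hx⟩
    obtain ⟨t, ht, rfl⟩ := hx
    obtain ⟨c, hcsum, j0, hj0⟩ := Fintype.not_linearIndependent_iff.mp hli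
    set eps : ℝ := if 0 < c j0 then 1 else -1 with heps
    have heps0 : eps * c j0 > 0 := by
      rcases lt_trichotomy (c j0) 0 with h | h | h
      · simp only [heps, if_neg (not_lt.mpr h.le)]; nlinarith
      · exact absurd h hj0
      · simp only [heps, if_pos h]; nlinarith
    set d : ι → ℝ := fun j => if h : j ∈ s then eps * c ⟨j, h⟩ else 0 with hd
    have hdj0 : 0 < d (j0 : ι) := by
      have hj : (j0 : ι) ∈ s := j0.2
      simp only [hd, dif_pos hj, Subtype.coe_eta]
      exact heps0
    have hdsum : ∑ j ∈ s, d j • g j = 0 := by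
      rw [← Finset.sum_coe_sort s (fun j => d j • g j)]
      have : ∀ j : s, d (j : ι) • g (j : ι) = eps • (c j • g (j : ι)) := by
        rintro ⟨j, hj⟩
        simp only [hd, dif_pos hj, smul_smul]
      rw [Finset.sum_congr rfl (fun j _ => this j), ← Finset.smul_sum]
      rw [hcsum, smul_zero]
    set P : Finset ι := s.filter (fun j => 0 < d j) with hP
    have hPne : P.Nonempty := ⟨j0, Finset.mem_filter.mpr ⟨j0.2, hdj0⟩⟩
    obtain ⟨j1, hj1P, hj1min⟩ := Finset.exists_min_image P (fun j => t j / d j) hPne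
    have hj1s : (j1 : ι) ∈ s := (Finset.mem_filter.mp hj1P).1
    have hdj1 : 0 < d j1 := (Finset.mem_filter.mp hj1P).2
    set ρ : ℝ := t j1 / d j1 with hρ
    have hρ0 : 0 ≤ ρ := div_nonneg (ht j1) hdj1.le
    set t' : ι → ℝ := fun j => if j ∈ s then t j - ρ * d j else 0 with ht'
    have ht'0 : ∀ j, 0 ≤ t' j := by
      intro j
      simp only [ht']
      split_ifs with hjs
      · by_cases hdp : 0 < d j
        · have h1 := hj1min j (Finset.mem_filter.mpr ⟨hjs, hdp⟩)
          have h2 : t j1 * d j ≤ t j * d j1 := (div_le_div_iff₀ hdj1 hdp).mp h1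
          have h4 : ρ * d j1 = t j1 := div_mul_cancel₀ _ (ne_of_gt hdj1)
          have h3 : (t j - ρ * d j) * d j1 = t j * d j1 - t j1 * d j := by
            linear_combination (-(d j)) * h4
          nlinarith [h3, h2, hdj1]
        · push_neg at hdp
          nlinarith [ht j, mul_nonpos_of_nonneg_of_nonpos hρ0 hdp]
      · exact le_refl 0
    have ht'j1 : t' j1 = 0 := by
      simp only [ht', if_pos hj1s, hρ]
      rw [div_mul_cancel₀ _ (ne_of_gt hdj1), sub_self]
    have hxeq : ∑ j ∈ s, t j • g j = ∑ j ∈ s.erase j1, t' j • g j := by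
      rw [Finset.sum_erase _ (by rw [ht'j1, zero_smul])]
      have : ∀ j ∈ s, t' j • g j = t j • g j - ρ • (d j • g j) := by
        intro j hj; simp [ht', if_pos hj, sub_smul, smul_smul]
      rw [Finset.sum_congr rfl this, Finset.sum_sub_distrib, ← Finset.smul_sum, hdsum,
        smul_zero, sub_zero]
    have hcard : (s.erase j1).card ≤ n := by
      have := Finset.card_erase_of_mem hj1s
      omega
    obtain ⟨s', hs's, hli', hx'⟩ := ih (s.erase j1) hcard _ ⟨t', ht'0, hxeq⟩
    exact ⟨s', hs's.trans (Finset.erase_subset _ _), hli', hxeq ▸ hx'⟩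

lemma isClosed_coneOf_of_li {ι : Type*} (g : ι → E) (s : Finset ι)
    (hli : LinearIndependent ℝ (fun j : s => g j)) : IsClosed (coneOf g s) := by
  classical
  set L : (s → ℝ) →ₗ[ℝ] E :=
    { toFun := fun c => ∑ j : s, c j • g (j : ι)
      map_add' := by intro a b; simp [add_smul, Finset.sum_add_distrib]
      map_smul' := by intro r a; simp [smul_smul, Finset.smul_sum] } with hL
  have hinj : LinearMap.ker L = ⊥ := by
    rw [LinearMap.ker_eq_bot']
    intro c hc
    have := Fintype.linearIndependent_iff.mp hli c hc
    funext j; exact this j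
  have hemb : IsClosedMap L := (LinearMap.isClosedEmbedding_of_injective hinj).isClosedMap
  have hset : IsClosed {c : s → ℝ | ∀ j, 0 ≤ c j} := by
    have : {c : s → ℝ | ∀ j, 0 ≤ c j} = ⋂ j, {c : s → ℝ | 0 ≤ c j} := by
      ext c; simp [Set.mem_iInter]
    rw [this]
    exact isClosed_iInter fun j => isClosed_le continuous_const (continuous_apply j)
  have himg : coneOf g s = L '' {c : s → ℝ | ∀ j, 0 ≤ c j} := by
    ext x
    constructor
    · rintro ⟨t, ht, rfl⟩
      refine ⟨fun j => t j, fun j => ht j, ?_⟩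
      simp only [hL, LinearMap.coe_mk, AddHom.coe_mk]
      exact (Finset.sum_coe_sort s (fun j => t j • g j))
    · rintro ⟨c, hc, rfl⟩
      refine ⟨fun j => if h : j ∈ s then c ⟨j, h⟩ else 0, fun j => ?_, ?_⟩
      · dsimp only; split_ifs with h
        · exact hc _
        · exact le_refl 0
      · simp only [hL, LinearMap.coe_mk, AddHom.coe_mk]
        rw [← Finset.sum_coe_sort s]
        refine Finset.sum_congr rfl ?_
        rintro ⟨j, hj⟩ _
        simp [dif_pos hj]
  rw [himg]
  exact hemb _ hset

lemma isClosed_coneOf {ι : Type*} (g : ι → E) (s : Finset ι) : IsClosed (coneOf g s) := by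
  classical
  have : coneOf g s = ⋃ s' ∈ {u : Finset ι | u ⊆ s ∧ LinearIndependent ℝ (fun j : u => g j)},
      coneOf g s' := by
    ext x
    simp only [Set.mem_iUnion, Set.mem_setOf_eq]
    constructor
    · intro hx
      obtain ⟨s', h1, h2, h3⟩ := caratheodory_coneOf g s.card s (le_refl _) x hx
      exact ⟨s', ⟨h1, h2⟩, h3⟩
    · rintro ⟨s', ⟨h1, _⟩, h3⟩
      exact coneOf_mono g h1 h3
  rw [this]
  refine Set.Finite.isClosed_biUnion ?_ ?_
  · exact (s.powerset.finite_toSet).subset (fun u hu => Finset.mem_coe.mpr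
      (Finset.mem_powerset.mpr hu.1))
  · exact fun u hu => isClosed_coneOf_of_li g u hu.2

/-- `coneOf` as a convex cone. -/
def coneCC {ι : Type*} (g : ι → E) (s : Finset ι) : ConvexCone ℝ E where
  carrier := coneOf g s
  smul_mem' := by
    rintro a ha x ⟨t, ht, rfl⟩
    refine ⟨fun j => a * t j, fun j => mul_nonneg ha.le (ht j), ?_⟩
    rw [Finset.smul_sum]
    exact Finset.sum_congr rfl fun j _ => by dsimp only; rw [smul_smul]
  add_mem' := by
    rintro x ⟨t1, ht1, rfl⟩ y ⟨t2, ht2, rfl⟩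
    refine ⟨fun j => t1 j + t2 j, fun j => add_nonneg (ht1 j) (ht2 j), ?_⟩
    rw [← Finset.sum_add_distrib]
    exact Finset.sum_congr rfl fun j _ => (add_smul (t1 j) (t2 j) (g j)).symm

lemma coneCC_coe {ι : Type*} (g : ι → E) (s : Finset ι) :
    (coneCC g s : Set E) = coneOf g s := rfl

lemma mem_coneCC {ι : Type*} {g : ι → E} {s : Finset ι} {x : E} :
    x ∈ coneCC g s ↔ x ∈ coneOf g s := Iff.rfl

end ConeLemmas

set_option maxHeartbeats 1600000 in
/-- **Supporting hyperplane with strictly positive normal at a Pareto optimal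
point of a convex polytope.** Let `V ⊆ ℝ^M` be the convex hull of a finite set
of points and let `v* ∈ V` be Pareto optimal in `V` (no `v ∈ V` Pareto
dominates `v*`). Then there exists `λ` with strictly positive entries summing
to `1` such that `λᵀ v* ≥ λᵀ v` for every `v ∈ V`. -/
theorem pareto_optimal_supporting_hyperplane {M : ℕ} (hM : 1 ≤ M)
    (F : Finset (Fin M → ℝ)) (V : Set (Fin M → ℝ))
    (hV : V = convexHull ℝ (F : Set (Fin M → ℝ)))
    (vstar : Fin M → ℝ) (hmem : vstar ∈ V)
    (hpareto : ∀ v ∈ V, ¬ ParetoDom v vstar) :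
    ∃ lam : Fin M → ℝ, (∀ i, 0 < lam i) ∧ (∑ i, lam i = 1) ∧
      ∀ v ∈ V, ∑ i, lam i * v i ≤ ∑ i, lam i * vstar i := by
  classical
  set eL : (Fin M → ℝ) ≃ₗ[ℝ] EuclideanSpace ℝ (Fin M) :=
    (WithLp.linearEquiv 2 ℝ (Fin M → ℝ)).symm with heL
  have heL_apply : ∀ (v : Fin M → ℝ) (i : Fin M), (eL v) i = v i := fun v i => rfl
  set g : (Fin M ⊕ {w : Fin M → ℝ // w ∈ F}) → EuclideanSpace ℝ (Fin M) :=
    Sum.elim (fun i => eL (-(Pi.single i 1))) (fun w => eL (w.1 - vstar)) with hg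
  -- generators belong to the cone
  have hgen : ∀ j, g j ∈ coneOf g Finset.univ := by
    intro j
    refine ⟨fun j' => if j' = j then 1 else 0,
      fun j' => by dsimp only; split_ifs <;> norm_num, ?_⟩
    have h1 : ∑ j', (if j' = j then (1:ℝ) else 0) • g j'
        = ∑ j', (if j' = j then g j' else 0) :=
      Finset.sum_congr rfl fun j' _ => by split_ifs <;> simp
    rw [h1, Finset.sum_ite_eq' Finset.univ j g]
    simp
  -- inner products against `eL`-images are dot products
  have hinner : ∀ (v : Fin M → ℝ) (z : EuclideanSpace ℝ (Fin M)),
      ⟪eL v, z⟫_ℝ = ∑ i, v i * z i := by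
    intro v z
    rw [PiLp.inner_apply]
    simp [heL_apply, RCLike.inner_apply, conj_trivial]
    exact Finset.sum_congr rfl fun i _ => mul_comm _ _
  -- claim 1 : basis vectors are not in the cone
  have claim1 : ∀ i0 : Fin M, eL (Pi.single i0 1) ∉ coneOf g Finset.univ := by
    intro i0 hmem'
    obtain ⟨t, ht, heq⟩ := hmem'
    have heq' : Pi.single i0 1 = (∑ i, t (Sum.inl i) • (-(Pi.single i 1 : Fin M → ℝ)))
        + ∑ w, t (Sum.inr w) • (w.1 - vstar) := by
      have h2 := congrArg eL.symm heq
      rw [map_sum, LinearEquiv.symm_apply_apply, Fintype.sum_sum_type] at h2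
      simpa [hg, map_smul, LinearEquiv.symm_apply_apply] using h2
    set x : Fin M → ℝ := ∑ w, t (Sum.inr w) • (w.1 - vstar) with hx
    have hxi : ∀ i, x i = (Pi.single i0 1 : Fin M → ℝ) i + t (Sum.inl i) := by
      intro i
      have h3 := congrFun heq' i
      have h4 : (∑ i', t (Sum.inl i') • (-(Pi.single i' 1 : Fin M → ℝ))) i
          = -(t (Sum.inl i)) := by
        rw [Finset.sum_apply]
        have : ∀ i', (t (Sum.inl i') • (-(Pi.single i' 1 : Fin M → ℝ))) i
            = -(if i = i' then t (Sum.inl i') else 0) := by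
          intro i'
          simp [Pi.single_apply, mul_ite]
        rw [Finset.sum_congr rfl fun i' _ => this i', Finset.sum_neg_distrib,
          Finset.sum_ite_eq Finset.univ i (fun i' => t (Sum.inl i'))]
        simp
      rw [Pi.add_apply, h4] at h3
      have h5 : x i = (Pi.single i0 1 : Fin M → ℝ) i - (-(t (Sum.inl i))) := by
        rw [hx]; linarith [h3]
      rw [h5]; ring
    have hxnn : ∀ i, 0 ≤ x i := by
      intro i
      rw [hxi i]
      have : (0:ℝ) ≤ (Pi.single i0 1 : Fin M → ℝ) i := by
        rw [Pi.single_apply]; split_ifs <;> norm_num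
      linarith [ht (Sum.inl i)]
    have hxi0 : 1 ≤ x i0 := by
      rw [hxi i0, Pi.single_eq_same]
      linarith [ht (Sum.inl i0)]
    set T : ℝ := ∑ w, t (Sum.inr w) with hT
    have hTnn : 0 ≤ T := Finset.sum_nonneg fun w _ => ht (Sum.inr w)
    have hTpos : 0 < T := by
      rcases eq_or_lt_of_le hTnn with h | h
      · exfalso
        have hall : ∀ w, t (Sum.inr w) = 0 := fun w =>
          (Finset.sum_eq_zero_iff_of_nonneg (fun w _ => ht (Sum.inr w))).mp h.symm w
            (Finset.mem_univ w)
        have hx0 : x = 0 := by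
          rw [hx]; exact Finset.sum_eq_zero fun w _ => by rw [hall w, zero_smul]
        have : x i0 = 0 := by rw [hx0]; rfl
        linarith
      · exact h
    set c : ℝ := (T + 1)⁻¹ with hc
    have hcpos : 0 < c := by rw [hc]; positivity
    have hcT : c * T < 1 := by
      have h1 : c * (T + 1) = 1 := inv_mul_cancel₀ (by linarith)
      nlinarith
    have hcTnn : 0 ≤ c * T := by positivity
    set yF : Fin M → ℝ := ∑ w, t (Sum.inr w) • (w.1 : Fin M → ℝ) with hyF
    set u : Fin M → ℝ := T⁻¹ • yF with hu
    have huF : u ∈ convexHull ℝ (F : Set (Fin M → ℝ)) := by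
      have := (convex_convexHull ℝ (F : Set (Fin M → ℝ))).sum_mem
        (t := Finset.univ) (w := fun w : {w // w ∈ F} => T⁻¹ * t (Sum.inr w))
        (z := fun w : {w // w ∈ F} => (w.1 : Fin M → ℝ))
        (fun w _ => mul_nonneg (inv_nonneg.mpr hTnn) (ht _))
        (by rw [← Finset.mul_sum, ← hT, inv_mul_cancel₀ (ne_of_gt hTpos)])
        (fun w _ => subset_convexHull ℝ _ w.2)
      rw [hu, hyF, Finset.smul_sum]
      simpa [smul_smul] using this
    set v : Fin M → ℝ := vstar + c • x with hv
    have hveq : v = (1 - c * T) • vstar + (c * T) • u := by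
      have h1 : (c * T) • u = c • yF := by
        rw [hu, smul_smul, mul_assoc, mul_inv_cancel₀ (ne_of_gt hTpos), mul_one]
      have h2 : x = yF - T • vstar := by
        rw [hx, hyF, hT]
        rw [Finset.sum_congr rfl (fun w _ => smul_sub (t (Sum.inr w)) (w.1 : Fin M → ℝ) vstar)]
        rw [Finset.sum_sub_distrib, Finset.sum_smul]
      rw [hv, h1, h2]
      module
    have hvV : v ∈ V := by
      rw [hV, hveq]
      exact (convex_convexHull ℝ (F : Set (Fin M → ℝ))) (hV ▸ hmem) huF
        (by linarith) hcTnn (by ring)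
    refine hpareto v hvV ⟨fun i => ?_, ⟨i0, ?_⟩⟩
    · have hvi : v i = vstar i + c * x i := rfl
      rw [hvi]
      nlinarith [hxnn i]
    · have hvi : v i0 = vstar i0 + c * x i0 := rfl
      rw [hvi]
      nlinarith
  -- the convex cone structure
  have hCne : ((coneCC g Finset.univ : ConvexCone ℝ (EuclideanSpace ℝ (Fin M))) :
      Set (EuclideanSpace ℝ (Fin M))).Nonempty :=
    ⟨0, ⟨fun _ => 0, fun _ => le_refl 0, by simp⟩⟩
  have hCclosed : IsClosed ((coneCC g Finset.univ : ConvexCone ℝ (EuclideanSpace ℝ (Fin M))) :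
      Set (EuclideanSpace ℝ (Fin M))) := isClosed_coneOf g Finset.univ
  have sep : ∀ i0 : Fin M, ∃ y : EuclideanSpace ℝ (Fin M),
      (∀ x : EuclideanSpace ℝ (Fin M), x ∈ coneCC g Finset.univ → 0 ≤ ⟪x, y⟫_ℝ) ∧
      ⟪y, eL (Pi.single i0 1)⟫_ℝ < 0 := fun i0 =>
    (by
      obtain ⟨y, h1, h2⟩ := ProperCone.hyperplane_separation' (x₀ := eL (Pi.single i0 1))
        (⟨(coneCC g Finset.univ).toPointedCone (.of_nonempty_of_isClosed hCne hCclosed),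
          hCclosed⟩ : ProperCone ℝ (EuclideanSpace ℝ (Fin M))) (claim1 i0)
      exact ⟨y, h1, by rw [real_inner_comm]; exact h2⟩)
  choose y hy1 hy2 using sep
  have hynp : ∀ i0 j, y i0 j ≤ 0 := by
    intro i0 j
    have h1 := hy1 i0 (g (Sum.inl j)) (mem_coneCC.mpr (hgen (Sum.inl j)))
    rw [hg] at h1
    simp only [Sum.elim_inl] at h1
    rw [hinner] at h1
    have heval : ∑ i, (-(Pi.single j 1 : Fin M → ℝ)) i * (y i0) i = -(y i0 j) := by
      have : ∀ i, (-(Pi.single j 1 : Fin M → ℝ)) i * (y i0) i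
          = -(if i = j then y i0 i else 0) := by
        intro i; simp [Pi.single_apply, ite_mul]
      rw [Finset.sum_congr rfl fun i _ => this i, Finset.sum_neg_distrib,
        Finset.sum_ite_eq' Finset.univ j (fun i => y i0 i)]
      rw [if_pos (Finset.mem_univ _)]
    rw [heval] at h1
    linarith
  have hydiag : ∀ i0, y i0 i0 < 0 := by
    intro i0
    have h2 := hy2 i0
    rw [real_inner_comm, hinner] at h2
    have heval : ∑ i, (Pi.single i0 1 : Fin M → ℝ) i * (y i0) i = y i0 i0 := by
      have : ∀ i, (Pi.single i0 1 : Fin M → ℝ) i * (y i0) i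
          = (if i = i0 then y i0 i else 0) := by
        intro i; simp [Pi.single_apply, ite_mul]
      rw [Finset.sum_congr rfl fun i _ => this i,
        Finset.sum_ite_eq' Finset.univ i0 (fun i => y i0 i)]
      rw [if_pos (Finset.mem_univ _)]
    rw [heval] at h2
    exact h2
  have hyw : ∀ i0, ∀ w ∈ F, 0 ≤ ∑ j, (w j - vstar j) * y i0 j := by
    intro i0 w hw
    have h1 := hy1 i0 (g (Sum.inr ⟨w, hw⟩)) (mem_coneCC.mpr (hgen (Sum.inr ⟨w, hw⟩)))
    rw [hg] at h1
    simp only [Sum.elim_inr] at h1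
    rw [hinner] at h1
    exact h1
  -- build lambda
  set lam0 : Fin M → ℝ := fun j => ∑ i0, -(y i0 j) with hlam0
  have hlam0pos : ∀ j, 0 < lam0 j := by
    intro j
    refine Finset.sum_pos' (fun i0 _ => by linarith [hynp i0 j]) ⟨j, Finset.mem_univ j, ?_⟩
    linarith [hydiag j]
  have hkey : ∀ w ∈ F, ∑ j, lam0 j * (w j - vstar j) ≤ 0 := by
    intro w hw
    have h1 : ∀ j, lam0 j * (w j - vstar j) = ∑ i0, -(y i0 j) * (w j - vstar j) := by
      intro j; rw [hlam0]; dsimp only; rw [Finset.sum_mul]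
    calc ∑ j, lam0 j * (w j - vstar j)
        = ∑ j, ∑ i0, -(y i0 j) * (w j - vstar j) :=
          Finset.sum_congr rfl fun j _ => h1 j
      _ = ∑ i0, ∑ j, -(y i0 j) * (w j - vstar j) := Finset.sum_comm
      _ ≤ 0 := by
          refine Finset.sum_nonpos fun i0 _ => ?_
          have h2 := hyw i0 w hw
          have h3 : ∑ j, -(y i0 j) * (w j - vstar j) = -(∑ j, (w j - vstar j) * y i0 j) := by
            rw [← Finset.sum_neg_distrib]
            exact Finset.sum_congr rfl fun j _ => by ring
          rw [h3]; linarith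
  set S : ℝ := ∑ j, lam0 j with hS
  have hSpos : 0 < S :=
    Finset.sum_pos (fun j _ => hlam0pos j) ⟨⟨0, by omega⟩, Finset.mem_univ _⟩
  refine ⟨fun j => lam0 j / S, fun j => div_pos (hlam0pos j) hSpos, ?_, ?_⟩
  · rw [← Finset.sum_div, ← hS, div_self (ne_of_gt hSpos)]
  · have hboundF : ∀ w ∈ F, ∑ i, (lam0 i / S) * w i ≤ ∑ i, (lam0 i / S) * vstar i := by
      intro w hw
      have h1 : ∑ i, (lam0 i / S) * w i - ∑ i, (lam0 i / S) * vstar i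
          = (∑ j, lam0 j * (w j - vstar j)) / S := by
        rw [← Finset.sum_sub_distrib, Finset.sum_div]
        refine Finset.sum_congr rfl fun j _ => ?_
        field_simp
      have h2 : (∑ j, lam0 j * (w j - vstar j)) / S ≤ 0 :=
        div_nonpos_of_nonpos_of_nonneg (hkey w hw) hSpos.le
      linarith [h1, h2]
    have hlin : IsLinearMap ℝ (fun v : Fin M → ℝ => ∑ i, (lam0 i / S) * v i) :=
      ⟨fun a b => by simp [mul_add, Finset.sum_add_distrib],
       fun r a => by
        simp only [Pi.smul_apply, smul_eq_mul, Finset.mul_sum]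
        exact Finset.sum_congr rfl fun i _ => by ring⟩
    have hconvA : Convex ℝ {v : Fin M → ℝ | ∑ i, (lam0 i / S) * v i
        ≤ ∑ i, (lam0 i / S) * vstar i} := convex_halfSpace_le hlin _
    have hsub : convexHull ℝ (F : Set (Fin M → ℝ)) ⊆
        {v : Fin M → ℝ | ∑ i, (lam0 i / S) * v i ≤ ∑ i, (lam0 i / S) * vstar i} :=
      convexHull_min (fun w hw => hboundF w hw) hconvA
    intro v hv
    rw [hV] at hv
    exact hsub hv
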